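/- Let A = {A₀,…,A_{m−1}} ⊂ M_d(R) with joint spectral radius 1. Let B₀ ∈ M_{md}(R) be the block cyclic permutation matrix (shifting the m blocks of size d cyclically, with identity blocks) and B₁ := diag(A₀, A₁, …, A_{m−1}) ∈ M_{md}(R). Then for every n ≥ 1, max over products P of n elements of {B₀,B₁} of ‖P‖ satisfies max_{0 ≤ k ≤ ⌊n/(m+1)⌋} max over products Q of k elements of A of ‖Q‖ ≤ max_P ‖P‖ ≤ max_{0 ≤ k ≤ n} max over products Q of k elements of A of ‖Q‖, where the empty product is the identity. -/

import Mathlib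

open Filter Topology

/-- The operator norm induced by the Euclidean norms. -/
noncomputable def eOpNorm {m n : Type*} [Fintype m] [Fintype n] [DecidableEq n]
    (A : Matrix m n ℝ) : ℝ :=
  ‖LinearMap.toContinuousLinearMap (Matrix.toEuclideanLin A)‖

/-- The maximal Euclidean operator norm over all products of `n` elements of `𝒜`. -/
noncomputable def mirS {m : Type*} [Fintype m] [DecidableEq m]
    (𝒜 : Set (Matrix m m ℝ)) (n : ℕ) : ℝ :=
  sSup { x | ∃ l : List (Matrix m m ℝ), l.length = n ∧ (∀ M ∈ l, M ∈ 𝒜) ∧ x = eOpNorm l.prod }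

/-- The maximal Euclidean operator norm over all products of `n` matrices from a family. -/
noncomputable def mirF {ι : Type*} {m : Type*} [Fintype m] [DecidableEq m]
    (f : ι → Matrix m m ℝ) (n : ℕ) : ℝ :=
  sSup { x | ∃ l : List ι, l.length = n ∧ x = eOpNorm (l.map f).prod }

/-- The block cyclic permutation matrix: the `(i, j)` block (of size `d × d`) is the
identity iff `i = j + 1 (mod m)`, else `0`. -/
def B0 (m d : ℕ) [NeZero m] : Matrix (Fin m × Fin d) (Fin m × Fin d) ℝ :=
  fun p q => if p.1 = q.1 + 1 ∧ p.2 = q.2 then 1 else 0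

/-- The block diagonal matrix `diag (A 0, …, A (m-1))`. -/
def B1 {m d : ℕ} (A : Fin m → Matrix (Fin d) (Fin d) ℝ) :
    Matrix (Fin m × Fin d) (Fin m × Fin d) ℝ :=
  fun p q => if p.1 = q.1 then A p.1 p.2 q.2 else 0

namespace Stmt11Aux

open Matrix
open Fin.CommRing Fin.NatCast

/-! ### Basic facts about `eOpNorm` -/

lemma toE_apply {ι : Type*} [Fintype ι] [DecidableEq ι] (M : Matrix ι ι ℝ)
    (x : EuclideanSpace ℝ ι) (i : ι) :
    Matrix.toEuclideanLin M x i = ∑ j, M i j * x j := rfl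

lemma eOpNorm_nonneg {ι : Type*} [Fintype ι] [DecidableEq ι] (M : Matrix ι ι ℝ) :
    0 ≤ eOpNorm M := norm_nonneg _

lemma eOpNorm_mul_le {ι : Type*} [Fintype ι] [DecidableEq ι] (M N : Matrix ι ι ℝ) :
    eOpNorm (M * N) ≤ eOpNorm M * eOpNorm N := Matrix.l2_opNorm_mul M N

lemma eOpNorm_one_le {ι : Type*} [Fintype ι] [DecidableEq ι] :
    eOpNorm (1 : Matrix ι ι ℝ) ≤ 1 := by
  have h : Matrix.toEuclideanLin (1 : Matrix ι ι ℝ) = LinearMap.id := by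
    apply LinearMap.ext; intro x
    ext i
    rw [toE_apply]
    simp [Matrix.one_apply]
  rw [eOpNorm, h]
  exact ContinuousLinearMap.norm_id_le

lemma enorm_sq {ι : Type*} [Fintype ι] (x : EuclideanSpace ℝ ι) :
    ‖x‖ ^ 2 = ∑ i, x i ^ 2 := by
  rw [EuclideanSpace.norm_eq, Real.sq_sqrt (by positivity)]
  simp [sq_abs]

/-! ### Shifted block matrices -/

variable {d m : ℕ} [NeZero m]

/-- The shifted block matrix: block column `j` maps to block row `j + r` via `C j`. -/
def Mblk (m d : ℕ) [NeZero m] (r : Fin m) (C : Fin m → Matrix (Fin d) (Fin d) ℝ) :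
    Matrix (Fin m × Fin d) (Fin m × Fin d) ℝ :=
  fun p q => if p.1 = q.1 + r then C q.1 p.2 q.2 else 0

lemma B0_eq (m d : ℕ) [NeZero m] :
    B0 m d = Mblk m d 1 (fun _ => 1) := by
  funext p q
  by_cases h : p.1 = q.1 + 1 <;> simp [B0, Mblk, h, Matrix.one_apply]

lemma B1_eq (A : Fin m → Matrix (Fin d) (Fin d) ℝ) :
    B1 A = Mblk m d 0 A := by
  funext p q
  by_cases h : p.1 = q.1 <;> simp [B1, Mblk, h]

lemma Mblk_one : Mblk m d 0 (fun _ => (1 : Matrix (Fin d) (Fin d) ℝ)) = 1 := by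
  funext p q
  by_cases h : p.1 = q.1 <;>
    simp [Mblk, Matrix.one_apply, Prod.ext_iff, h]

lemma Mblk_mul (r s : Fin m) (C D : Fin m → Matrix (Fin d) (Fin d) ℝ) :
    Mblk m d r C * Mblk m d s D = Mblk m d (r + s) (fun j => C (j + s) * D j) := by
  funext p q
  rw [Matrix.mul_apply, Fintype.sum_prod_type]
  rw [Finset.sum_eq_single (q.1 + s)]
  · by_cases h : p.1 = q.1 + (r + s)
    · have h' : p.1 = q.1 + s + r := by rw [h]; ring
      simp [Mblk, h', h, Matrix.mul_apply, show q.1 + s + r = q.1 + (r + s) by ring]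
    · have h' : ¬ p.1 = q.1 + s + r := by
        intro hc; exact h (by rw [hc]; ring)
      simp [Mblk, h', h]
  · intro j _ hj
    have : ¬ (j = q.1 + s) := hj
    simp [Mblk, this]
  · simp

/-! ### Norm of shifted block matrices -/

/-- Extract the `j`-th block of a vector. -/
def blk {d m : ℕ} (x : EuclideanSpace ℝ (Fin m × Fin d)) (j : Fin m) :
    EuclideanSpace ℝ (Fin d) := WithLp.toLp 2 (fun b => x (j, b))

lemma toE_Mblk (r : Fin m) (C : Fin m → Matrix (Fin d) (Fin d) ℝ)
    (x : EuclideanSpace ℝ (Fin m × Fin d)) (i : Fin m) (a : Fin d) :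
    Matrix.toEuclideanLin (Mblk m d r C) x (i, a)
      = Matrix.toEuclideanLin (C (i - r)) (blk x (i - r)) a := by
  rw [toE_apply, toE_apply, Fintype.sum_prod_type]
  rw [Finset.sum_eq_single (i - r)]
  · refine Finset.sum_congr rfl fun b _ => ?_
    have hc : i = i - r + r := by ring
    show (if i = i - r + r then C (i - r) a b else 0) * x (i - r, b)
        = C (i - r) a b * blk x (i - r) b
    rw [if_pos hc]
    rfl
  · intro j _ hj
    have hne : ¬ i = j + r := fun h => hj (by rw [h]; ring)
    simp [Mblk, hne]
  · simp

lemma norm_sq_split (x : EuclideanSpace ℝ (Fin m × Fin d)) :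
    ‖x‖ ^ 2 = ∑ j, ‖blk x j‖ ^ 2 := by
  rw [enorm_sq, Fintype.sum_prod_type]
  exact Finset.sum_congr rfl fun j _ => by rw [enorm_sq]; rfl

lemma eOpNorm_Mblk_le (r : Fin m) (C : Fin m → Matrix (Fin d) (Fin d) ℝ) {B : ℝ}
    (hB : 0 ≤ B) (h : ∀ j, eOpNorm (C j) ≤ B) :
    eOpNorm (Mblk m d r C) ≤ B := by
  refine ContinuousLinearMap.opNorm_le_bound _ hB fun x => ?_
  have hsq : ‖Matrix.toEuclideanLin (Mblk m d r C) x‖ ^ 2 ≤ (B * ‖x‖) ^ 2 := by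
    calc ‖Matrix.toEuclideanLin (Mblk m d r C) x‖ ^ 2
        = ∑ i, ‖Matrix.toEuclideanLin (C (i - r)) (blk x (i - r))‖ ^ 2 := by
          rw [enorm_sq, Fintype.sum_prod_type]
          refine Finset.sum_congr rfl fun i _ => ?_
          rw [enorm_sq]
          exact Finset.sum_congr rfl fun a _ => by rw [toE_Mblk]
      _ = ∑ j, ‖Matrix.toEuclideanLin (C j) (blk x j)‖ ^ 2 :=
          Fintype.sum_equiv (Equiv.subRight r) _ _ fun i => rfl
      _ ≤ ∑ j, (B * ‖blk x j‖) ^ 2 := by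
          refine Finset.sum_le_sum fun j _ => ?_
          refine pow_le_pow_left₀ (norm_nonneg _) ?_ 2
          refine le_trans ((LinearMap.toContinuousLinearMap
            (Matrix.toEuclideanLin (C j))).le_opNorm (blk x j)) ?_
          exact mul_le_mul_of_nonneg_right (h j) (norm_nonneg _)
      _ = (B * ‖x‖) ^ 2 := by
          simp only [mul_pow]
          rw [← Finset.mul_sum, ← norm_sq_split]
  exact (pow_le_pow_iff_left₀ (norm_nonneg _) (mul_nonneg hB (norm_nonneg _)) two_ne_zero).mp hsq

lemma le_eOpNorm_Mblk (r : Fin m) (C : Fin m → Matrix (Fin d) (Fin d) ℝ) (j : Fin m) :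
    eOpNorm (C j) ≤ eOpNorm (Mblk m d r C) := by
  refine ContinuousLinearMap.opNorm_le_bound _ (eOpNorm_nonneg _) fun v => ?_
  classical
  set x : EuclideanSpace ℝ (Fin m × Fin d) := WithLp.toLp 2 (fun p : Fin m × Fin d => if p.1 = j then v p.2 else 0) with hxdef
  have hblk : blk x j = v := by ext b; simp [blk, x]
  have hxnorm : ‖x‖ = ‖v‖ := by
    have hsq : ‖x‖ ^ 2 = ‖v‖ ^ 2 := by
      rw [enorm_sq, enorm_sq, Fintype.sum_prod_type, Finset.sum_eq_single j]
      · exact Finset.sum_congr rfl fun b _ => by simp [x]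
      · intro i _ hi; simp [x, hi]
      · simp
    rw [← Real.sqrt_sq (norm_nonneg x), hsq, Real.sqrt_sq (norm_nonneg v)]
  have happ : ∀ a, Matrix.toEuclideanLin (C j) v a
      = Matrix.toEuclideanLin (Mblk m d r C) x (j + r, a) := by
    intro a
    rw [toE_Mblk]
    rw [show j + r - r = j by ring, hblk]
  have hle : ‖Matrix.toEuclideanLin (C j) v‖ ^ 2
      ≤ ‖Matrix.toEuclideanLin (Mblk m d r C) x‖ ^ 2 := by
    rw [enorm_sq, enorm_sq, Fintype.sum_prod_type]
    calc ∑ a, Matrix.toEuclideanLin (C j) v a ^ 2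
        = ∑ a, Matrix.toEuclideanLin (Mblk m d r C) x (j + r, a) ^ 2 :=
          Finset.sum_congr rfl fun a _ => by rw [happ]
      _ ≤ ∑ i, ∑ a, Matrix.toEuclideanLin (Mblk m d r C) x (i, a) ^ 2 :=
          Finset.single_le_sum (f := fun i => ∑ a,
            Matrix.toEuclideanLin (Mblk m d r C) x (i, a) ^ 2)
            (fun i _ => by positivity) (Finset.mem_univ (j + r))
  have h1 : ‖Matrix.toEuclideanLin (C j) v‖ ≤ ‖Matrix.toEuclideanLin (Mblk m d r C) x‖ :=
    (pow_le_pow_iff_left₀ (norm_nonneg _) (norm_nonneg _) two_ne_zero).mp hle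
  calc ‖Matrix.toEuclideanLin (C j) v‖
      ≤ ‖Matrix.toEuclideanLin (Mblk m d r C) x‖ := h1
    _ ≤ eOpNorm (Mblk m d r C) * ‖x‖ := (LinearMap.toContinuousLinearMap
        (Matrix.toEuclideanLin (Mblk m d r C))).le_opNorm x
    _ = eOpNorm (Mblk m d r C) * ‖v‖ := by rw [hxnorm]

/-! ### Products of words in `B0`, `B1` -/

lemma Mblk_congr {a b : Fin m} {F G : Fin m → Matrix (Fin d) (Fin d) ℝ}
    (h1 : a = b) (h2 : ∀ i, F i = G i) : Mblk m d a F = Mblk m d b G := by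
  subst h1; exact congrArg _ (funext h2)

lemma prod_replicate_B0 (t : ℕ) :
    (List.replicate t (B0 m d)).prod = Mblk m d (t : Fin m) (fun _ => 1) := by
  induction t with
  | zero =>
      rw [List.replicate_zero, List.prod_nil, Nat.cast_zero]
      exact Mblk_one.symm
  | succ t ih =>
      rw [List.replicate_succ, List.prod_cons, ih, B0_eq, Mblk_mul]
      refine Mblk_congr ?_ fun i => by simp
      push_cast; ring

lemma prod_structure (A : Fin m → Matrix (Fin d) (Fin d) ℝ) :
    ∀ W : List (Matrix (Fin m × Fin d) (Fin m × Fin d) ℝ),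
    (∀ M ∈ W, M = B0 m d ∨ M = B1 A) →
    ∃ k : ℕ, k ≤ W.length ∧ ∃ r : Fin m, ∃ f : Fin m → List (Fin m),
      (∀ i, (f i).length = k) ∧ W.prod = Mblk m d r (fun i => ((f i).map A).prod) := by
  intro W
  induction W with
  | nil =>
      intro _
      refine ⟨0, le_rfl, 0, fun _ => [], fun _ => rfl, ?_⟩
      rw [List.prod_nil]
      simp only [List.map_nil, List.prod_nil]
      exact Mblk_one.symm
  | cons M W ih =>
      intro hmem
      obtain ⟨k, hk, r, f, hf, hprod⟩ := ih (fun N hN => hmem N (List.mem_cons_of_mem _ hN))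
      rcases hmem M List.mem_cons_self with hM | hM
      · refine ⟨k, le_trans hk (by simp), 1 + r, f, hf, ?_⟩
        rw [List.prod_cons, hprod, hM, B0_eq, Mblk_mul]
        exact Mblk_congr rfl fun i => by simp
      · refine ⟨k + 1, by simpa using Nat.succ_le_succ hk, r,
          fun i => (i + r) :: f i, fun i => by simp [hf i], ?_⟩
        rw [List.prod_cons, hprod, hM, B1_eq, Mblk_mul]
        exact Mblk_congr (zero_add r) fun i => by simp

lemma word_exists (A : Fin m → Matrix (Fin d) (Fin d) ℝ) (l : List (Fin m)) :
    ∃ W : List (Matrix (Fin m × Fin d) (Fin m × Fin d) ℝ),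
      W.length = l.length * (m + 1) ∧ (∀ M ∈ W, M = B0 m d ∨ M = B1 A) ∧
      W.prod = Mblk m d 0 (fun i => (l.map (fun j => A (i + j))).prod) := by
  induction l with
  | nil =>
      refine ⟨[], by simp, by simp, ?_⟩
      rw [List.prod_nil]
      simp only [List.map_nil, List.prod_nil]
      exact Mblk_one.symm
  | cons j l ih =>
      obtain ⟨W, hlen, hmem, hprod⟩ := ih
      refine ⟨(List.replicate (m - j.val) (B0 m d) ++
          B1 A :: List.replicate j.val (B0 m d)) ++ W, ?_, ?_, ?_⟩
      · rw [List.length_append, List.length_append, List.length_cons,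
          List.length_replicate, List.length_replicate, hlen, List.length_cons]
        have := j.isLt
        ring_nf
        omega
      · intro M hM
        rcases List.mem_append.mp hM with h | h
        · rcases List.mem_append.mp h with h' | h'
          · exact Or.inl (List.eq_of_mem_replicate h')
          · rcases List.mem_cons.mp h' with h'' | h''
            · exact Or.inr h''
            · exact Or.inl (List.eq_of_mem_replicate h'')
        · exact hmem M h
      · rw [List.prod_append, List.prod_append, List.prod_cons,
          prod_replicate_B0, prod_replicate_B0, hprod, B1_eq]
        simp only [Mblk_mul]
        have hc : ((j.val : ℕ) : Fin m) = j := Fin.cast_val_eq_self j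
        have ht : ((m - j.val : ℕ) : Fin m) + ((j.val : ℕ) : Fin m) = 0 := by
          rw [← Nat.cast_add, Nat.sub_add_cancel (le_of_lt j.isLt), Fin.natCast_self]
        refine Mblk_congr ?_ fun i => ?_
        · rw [add_zero, zero_add, ht]
        · simp [hc, List.map_cons, List.prod_cons]

end Stmt11Aux

open Fin.CommRing Fin.NatCast

set_option maxHeartbeats 2000000 in
theorem stmt11 {d m : ℕ} [NeZero m] (A : Fin m → Matrix (Fin d) (Fin d) ℝ)
    (hjsr : Tendsto (fun n : ℕ => mirF A n ^ ((n : ℝ)⁻¹)) atTop (𝓝 1)) :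
    ∀ n : ℕ, 1 ≤ n →
      (∀ k : ℕ, k ≤ n / (m + 1) → mirF A k ≤ mirS {B0 m d, B1 A} n) ∧
      (∃ k : ℕ, k ≤ n ∧ mirS {B0 m d, B1 A} n ≤ mirF A k) := by
  intro n hn
  haveI : Nonempty (Fin m) := ⟨⟨0, Nat.pos_of_ne_zero (NeZero.ne m)⟩⟩
  obtain ⟨i₀⟩ := ‹Nonempty (Fin m)›
  set 𝒜 : Set (Matrix (Fin m × Fin d) (Fin m × Fin d) ℝ) := {B0 m d, B1 A} with h𝒜
  have hmem𝒜 : ∀ M, M ∈ 𝒜 → M = B0 m d ∨ M = B1 A := by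
    intro M h
    simpa [h𝒜, Set.mem_insert_iff] using h
  have hB0mem : B0 m d ∈ 𝒜 := Set.mem_insert _ _
  have hB1mem : B1 A ∈ 𝒜 := Set.mem_insert_of_mem _ rfl
  -- upper bound for products of `A`'s
  set Cmax : ℝ := Finset.univ.sup' Finset.univ_nonempty (fun i => eOpNorm (A i)) with hC
  have hCle : ∀ i, eOpNorm (A i) ≤ Cmax := fun i => by
    rw [hC]; exact Finset.le_sup' (fun i => eOpNorm (A i)) (Finset.mem_univ i)
  have hCmax_nonneg : 0 ≤ Cmax := le_trans (Stmt11Aux.eOpNorm_nonneg (A i₀)) (hCle i₀)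
  have hprod_le : ∀ l : List (Fin m), eOpNorm ((l.map A).prod) ≤ Cmax ^ l.length := by
    intro l
    induction l with
    | nil => simpa using Stmt11Aux.eOpNorm_one_le
    | cons j l ih =>
        rw [List.map_cons, List.prod_cons, List.length_cons, pow_succ']
        exact le_trans (Stmt11Aux.eOpNorm_mul_le _ _)
          (mul_le_mul (hCle j) ih (Stmt11Aux.eOpNorm_nonneg _) hCmax_nonneg)
  have hbddF : ∀ k : ℕ,
      BddAbove { x | ∃ l : List (Fin m), l.length = k ∧ x = eOpNorm (l.map A).prod } := by
    intro k
    refine ⟨Cmax ^ k, fun x hx => ?_⟩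
    obtain ⟨l, hl, rfl⟩ := hx
    simpa [hl] using hprod_le l
  have hmemF : ∀ (k : ℕ) (l : List (Fin m)), l.length = k →
      eOpNorm ((l.map A).prod) ≤ mirF A k :=
    fun k l hl => le_csSup (hbddF k) ⟨l, hl, rfl⟩
  have hFnonneg : ∀ k, 0 ≤ mirF A k := fun k =>
    le_trans (Stmt11Aux.eOpNorm_nonneg _) (hmemF k (List.replicate k i₀) (by simp))
  -- upper bound for products of elements of `𝒜`
  set Dmax : ℝ := max (eOpNorm (B0 m d)) (eOpNorm (B1 A)) with hD
  have hDnonneg : 0 ≤ Dmax := le_trans (Stmt11Aux.eOpNorm_nonneg _) (le_max_left _ _)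
  have hSprod : ∀ W : List (Matrix (Fin m × Fin d) (Fin m × Fin d) ℝ),
      (∀ M ∈ W, M ∈ 𝒜) → eOpNorm W.prod ≤ Dmax ^ W.length := by
    intro W
    induction W with
    | nil => intro _; simpa using Stmt11Aux.eOpNorm_one_le
    | cons M W ih =>
        intro hmem
        rw [List.prod_cons, List.length_cons, pow_succ']
        refine le_trans (Stmt11Aux.eOpNorm_mul_le _ _)
          (mul_le_mul ?_ (ih fun N hN => hmem N (List.mem_cons_of_mem _ hN))
            (Stmt11Aux.eOpNorm_nonneg _) hDnonneg)
        rcases hmem𝒜 M (hmem M List.mem_cons_self) with rfl | rfl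
        · exact le_max_left _ _
        · exact le_max_right _ _
  have hbddS : BddAbove { x | ∃ l : List (Matrix (Fin m × Fin d) (Fin m × Fin d) ℝ),
      l.length = n ∧ (∀ M ∈ l, M ∈ 𝒜) ∧ x = eOpNorm l.prod } := by
    refine ⟨Dmax ^ n, fun x hx => ?_⟩
    obtain ⟨W, hWl, hWm, rfl⟩ := hx
    simpa [hWl] using hSprod W hWm
  constructor
  · -- lower bound
    intro k hk
    have hkn : k * (m + 1) ≤ n := (Nat.le_div_iff_mul_le (Nat.succ_pos m)).mp hk
    unfold mirF mirS
    refine csSup_le ⟨eOpNorm (((List.replicate k i₀).map A)).prod,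
      List.replicate k i₀, by simp, rfl⟩ ?_
    rintro x ⟨l, hl, rfl⟩
    obtain ⟨W, hWlen, hWmem, hWprod⟩ := Stmt11Aux.word_exists A l
    set Wfull := List.replicate (n - k * (m + 1)) (B0 m d) ++ W with hWf
    have hlen : Wfull.length = n := by
      rw [hWf, List.length_append, List.length_replicate, hWlen, hl]
      omega
    have hmemfull : ∀ M ∈ Wfull, M ∈ 𝒜 := by
      intro M hM
      rcases List.mem_append.mp hM with h | h
      · rw [List.eq_of_mem_replicate h]; exact hB0mem
      · rcases hWmem M h with rfl | rfl
        · exact hB0mem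
        · exact hB1mem
    have hprodfull : Wfull.prod = Stmt11Aux.Mblk m d (((n - k * (m + 1) : ℕ)) : Fin m)
        (fun i => (l.map (fun j => A (i + j))).prod) := by
      rw [hWf, List.prod_append, Stmt11Aux.prod_replicate_B0, hWprod, Stmt11Aux.Mblk_mul]
      exact Stmt11Aux.Mblk_congr (add_zero _) fun i => by simp
    have hx : eOpNorm ((l.map A).prod) ≤ eOpNorm Wfull.prod := by
      have h0 : (l.map A).prod = (l.map (fun j => A ((0 : Fin m) + j))).prod := by
        simp [zero_add]
      have hble := Stmt11Aux.le_eOpNorm_Mblk (m := m) (d := d)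
        (((n - k * (m + 1) : ℕ)) : Fin m) (fun i => (l.map (fun j => A (i + j))).prod) 0
      rw [h0, hprodfull]
      exact hble
    exact le_trans hx (le_csSup hbddS ⟨Wfull, hlen, hmemfull, rfl⟩)
  · -- upper bound
    obtain ⟨ks, hks, hmax⟩ := Finset.exists_max_image (Finset.range (n + 1)) (mirF A)
      ⟨0, Finset.mem_range.mpr (Nat.succ_pos n)⟩
    refine ⟨ks, Nat.lt_succ_iff.mp (Finset.mem_range.mp hks), ?_⟩
    unfold mirS
    refine csSup_le ⟨eOpNorm ((List.replicate n (B0 m d)).prod), List.replicate n (B0 m d),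
      by simp, fun M hM => by rw [List.eq_of_mem_replicate hM]; exact hB0mem, rfl⟩ ?_
    rintro x ⟨W, hWlen, hWmem, rfl⟩
    obtain ⟨k, hk, r, f, hf, hWprod⟩ :=
      Stmt11Aux.prod_structure A W (fun M hM => hmem𝒜 M (hWmem M hM))
    rw [hWprod]
    refine le_trans (Stmt11Aux.eOpNorm_Mblk_le r _ (hFnonneg k) fun i => hmemF k (f i) (hf i))
      (hmax k (Finset.mem_range.mpr (Nat.lt_succ_of_le (hWlen ▸ hk))))
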